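/- Let 0 < δ < δ₁ < 1 and let ε > 0 and T > 0 be real numbers. Then there exists R₁ > 0 such that for every R ≥ R₁ and every a : ℝ → ℝ satisfying a'(t) = R · a(t) · (a(t) - δ) · (1 - a(t)) for all t ≥ 0 (in the sense of HasDerivAt) with δ₁ ≤ a(0) < 1, one has 1 - a(T) < ε. -/

import Mathlib

open Set Filter Real Topology

theorem Dgate_rate_for_convergence_to_one
    (δ δ₁ ε T : ℝ) (h0 : 0 < δ) (h1 : δ < δ₁) (h2 : δ₁ < 1)
    (hε : 0 < ε) (hT : 0 < T) :
    ∃ R₁ : ℝ, 0 < R₁ ∧ ∀ R : ℝ, R₁ ≤ R → ∀ a : ℝ → ℝ,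
      (∀ t : ℝ, 0 ≤ t → HasDerivAt a (R * a t * (a t - δ) * (1 - a t)) t) →
      δ₁ ≤ a 0 → a 0 < 1 → 1 - a T < ε := by
  set k : ℝ := δ₁ * (δ₁ - δ) with hkdef
  have hδ₁pos : 0 < δ₁ := h0.trans h1
  have hk : 0 < k := mul_pos hδ₁pos (sub_pos.2 h1)
  have hkT : 0 < k * T := mul_pos hk hT
  refine ⟨max 1 ((Real.log (1 / ε) + 1) / (k * T)),
    lt_of_lt_of_le one_pos (le_max_left _ _), ?_⟩
  intro R hR a ha ha0 ha01
  have hR1 : (1 : ℝ) ≤ R := le_trans (le_max_left _ _) hR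
  have hRpos : 0 < R := lt_of_lt_of_le one_pos hR1
  have hR2 : (Real.log (1 / ε) + 1) / (k * T) ≤ R := le_trans (le_max_right _ _) hR
  -- Step 1 : a t < 1 for all t ∈ [0, T]
  have hlt1 : ∀ t, 0 ≤ t → t ≤ T → a t < 1 := by
    by_contra hcon
    push_neg at hcon
    obtain ⟨t₁, ht₁0, ht₁T, ht₁⟩ := hcon
    have hconta : ContinuousOn a (Icc 0 t₁) := fun t ht =>
      ((ha t ht.1).continuousAt).continuousWithinAt
    obtain ⟨s₁, hs₁mem, hs₁⟩ : ∃ s₁ ∈ Icc (0:ℝ) t₁, a s₁ = 1 :=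
      intermediate_value_Icc ht₁0 hconta ⟨ha01.le, ht₁⟩
    have hconta' : ContinuousOn a (Icc 0 s₁) :=
      hconta.mono (Icc_subset_Icc le_rfl hs₁mem.2)
    -- bound for the coefficient
    obtain ⟨C, hC⟩ : ∃ C, ∀ x ∈ Icc (0:ℝ) s₁, ‖R * a x * (a x - δ)‖ ≤ C :=
      isCompact_Icc.exists_bound_of_continuousOn
        ((continuousOn_const.mul hconta').mul (hconta'.sub continuousOn_const))
    set K : ℝ := max C 0 with hKdef
    set g : ℝ → ℝ := fun s => 1 - a (s₁ - s) with hgdef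
    set g' : ℝ → ℝ := fun s =>
      R * a (s₁ - s) * (a (s₁ - s) - δ) * (1 - a (s₁ - s)) with hg'def
    have hmaps : ∀ s ∈ Icc (0:ℝ) s₁, s₁ - s ∈ Icc (0:ℝ) s₁ := by
      intro s hs; exact ⟨by linarith [hs.2], by linarith [hs.1]⟩
    have hgcont : ContinuousOn g (Icc 0 s₁) := by
      apply continuousOn_const.sub
      exact hconta'.comp (continuous_const.sub continuous_id).continuousOn hmaps
    have hgderiv : ∀ x ∈ Ico (0:ℝ) s₁, HasDerivWithinAt g (g' x) (Ici x) x := by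
      intro x hx
      have hx0 : (0:ℝ) ≤ s₁ - x := by linarith [hx.2]
      have hinner : HasDerivAt (fun s : ℝ => s₁ - s) (-1) x := by
        simpa using (hasDerivAt_id x).const_sub s₁
      have h2' := ((ha (s₁ - x) hx0).comp x hinner).const_sub 1
      have : HasDerivAt g (g' x) x := by
        convert h2' using 1
        · rfl
        · rfl
        · rfl
        · simp [hg'def]
      exact this.hasDerivWithinAt
    have hbound : ∀ x ∈ Ico (0:ℝ) s₁, ‖g' x‖ ≤ K * ‖g x‖ + 0 := by
      intro x hx
      have hmem : s₁ - x ∈ Icc (0:ℝ) s₁ := hmaps x ⟨hx.1, hx.2.le⟩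
      have hCx := hC _ hmem
      have : ‖g' x‖ = ‖R * a (s₁ - x) * (a (s₁ - x) - δ)‖ * ‖g x‖ := by
        rw [← norm_mul]
      rw [this, add_zero]
      apply mul_le_mul_of_nonneg_right _ (norm_nonneg _)
      exact le_trans hCx (le_max_left _ _)
    have hg0 : ‖g 0‖ ≤ 0 := by simp [hgdef, hs₁]
    have := norm_le_gronwallBound_of_norm_deriv_right_le hgcont hgderiv hg0 hbound
      s₁ ⟨hs₁mem.1, le_rfl⟩
    have hgb : gronwallBound 0 K 0 (s₁ - 0) = 0 := by
      by_cases hK0 : K = 0 <;> simp [gronwallBound, hK0]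
    rw [hgb] at this
    have : g s₁ = 0 := by
      have := norm_le_zero_iff.mp this; exact this
    simp only [hgdef, sub_self] at this
    have : a 0 = 1 := by linarith [this]
    linarith
  -- Step 2 : δ₁ ≤ a t for all t ∈ [0, T]
  have hge : ∀ t, 0 ≤ t → t ≤ T → δ₁ ≤ a t := by
    by_contra hcon
    push_neg at hcon
    obtain ⟨t₂, ht₂0, ht₂T, ht₂⟩ := hcon
    set S : Set ℝ := Icc 0 t₂ ∩ a ⁻¹' Ici δ₁ with hSdef
    have hconta : ContinuousOn a (Icc 0 t₂) := fun t ht =>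
      ((ha t ht.1).continuousAt).continuousWithinAt
    have hS0 : (0:ℝ) ∈ S := ⟨⟨le_rfl, ht₂0⟩, ha0⟩
    have hSbdd : BddAbove S := ⟨t₂, fun x hx => hx.1.2⟩
    have hSclosed : IsClosed S :=
      hconta.preimage_isClosed_of_isClosed isClosed_Icc isClosed_Ici
    set u : ℝ := sSup S with hudef
    have huS : u ∈ S := hSclosed.csSup_mem ⟨0, hS0⟩ hSbdd
    have hu0 : 0 ≤ u := huS.1.1
    have hau : δ₁ ≤ a u := huS.2
    have hult : u < t₂ := lt_of_le_of_ne huS.1.2 (by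
      intro h; rw [h] at hau; linarith)
    -- eventually δ₁ ≤ a t on 𝓝[>] u
    have hev : ∀ᶠ t in 𝓝[>] u, δ₁ ≤ a t := by
      rcases eq_or_lt_of_le hau with heq | hlt
      · -- a u = δ₁ : positive derivative
        have hau1 : a u < 1 := hlt1 u hu0 (le_trans hult.le ht₂T)
        have hd : 0 < R * a u * (a u - δ) * (1 - a u) := by
          rw [← heq]
          exact mul_pos (mul_pos (mul_pos hRpos hδ₁pos) (by linarith)) (by linarith)
        have hslope := (hasDerivAt_iff_tendsto_slope.1 (ha u hu0)).eventually
          (eventually_gt_nhds hd)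
        have hslope' : ∀ᶠ t in 𝓝[>] u, 0 < slope a u t :=
          hslope.filter_mono (nhdsWithin_mono u fun x hx => ne_of_gt hx)
        filter_upwards [hslope', self_mem_nhdsWithin] with t hst htu
        have htu' : 0 < t - u := sub_pos.2 htu
        rw [slope_def_field] at hst
        have hpos : 0 < a t - a u := by
          rcases div_pos_iff.1 hst with ⟨h, _⟩ | ⟨_, h⟩
          · exact h
          · linarith
        linarith [heq.le]
      · -- a u > δ₁ : continuity
        have hc : ContinuousAt a u := (ha u hu0).continuousAt
        have hev' : ∀ᶠ t in 𝓝 u, δ₁ < a t :=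
          ContinuousAt.eventually_lt continuousAt_const hc hlt
        exact (hev'.mono fun t ht => ht.le).filter_mono nhdsWithin_le_nhds
    have hIoc : Ioc u t₂ ∈ 𝓝[>] u := Ioc_mem_nhdsGT_of_mem ⟨le_rfl, hult⟩
    obtain ⟨t, hta, htIoc⟩ := (hev.and hIoc).exists
    have : t ∈ S := ⟨⟨le_trans hu0 htIoc.1.le, htIoc.2⟩, hta⟩
    have : t ≤ u := le_csSup hSbdd this
    linarith [htIoc.1]
  -- Step 3 : comparison with exponential decay
  set φ : ℝ → ℝ := fun t => (1 - a t) * Real.exp (R * k * t) with hφdef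
  have hφderiv : ∀ x ∈ Ioo (0:ℝ) T,
      HasDerivAt φ (-(R * a x * (a x - δ) * (1 - a x)) * Real.exp (R * k * x)
        + (1 - a x) * (Real.exp (R * k * x) * (R * k))) x := by
    intro x hx
    have h1' := (ha x hx.1.le).const_sub 1
    have h2' : HasDerivAt (fun t : ℝ => Real.exp (R * k * t))
        (Real.exp (R * k * x) * (R * k)) x := by
      simpa using (((hasDerivAt_id x).const_mul (R * k)).exp)
    exact h1'.mul h2'
  have hφcont : ContinuousOn φ (Icc 0 T) := by
    apply ContinuousOn.mul
    · exact continuousOn_const.sub fun t ht => ((ha t ht.1).continuousAt).continuousWithinAt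
    · exact (Real.continuous_exp.comp (continuous_const.mul continuous_id)).continuousOn
  have hant : AntitoneOn φ (Icc 0 T) := by
    apply antitoneOn_of_deriv_nonpos (convex_Icc 0 T) hφcont
    · intro x hx
      rw [interior_Icc] at hx
      exact ((hφderiv x hx).differentiableAt).differentiableWithinAt
    · intro x hx
      rw [interior_Icc] at hx
      rw [(hφderiv x hx).deriv]
      have hxle : a x < 1 := hlt1 x hx.1.le hx.2.le
      have hxge : δ₁ ≤ a x := hge x hx.1.le hx.2.le
      have hq : k ≤ a x * (a x - δ) := by nlinarith
      have hE : 0 < Real.exp (R * k * x) := Real.exp_pos _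
      nlinarith [mul_nonneg (mul_nonneg (mul_nonneg hE.le hRpos.le)
        (by linarith : (0:ℝ) ≤ 1 - a x)) (by linarith : (0:ℝ) ≤ a x * (a x - δ) - k)]
  have hφT : φ T ≤ φ 0 := hant ⟨le_rfl, hT.le⟩ ⟨hT.le, le_rfl⟩ hT.le
  have hφ0 : φ 0 < 1 := by simp [hφdef]; linarith
  have hET : 0 < Real.exp (R * k * T) := Real.exp_pos _
  have hmain : 1 - a T < Real.exp (-(R * k * T)) := by
    have h' : (1 - a T) * Real.exp (R * k * T) < 1 := lt_of_le_of_lt hφT hφ0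
    rw [Real.exp_neg, ← one_div, lt_div_iff₀ hET]
    exact h'
  have hRkT : Real.log (1 / ε) + 1 ≤ R * (k * T) := by
    rw [div_le_iff₀ hkT] at hR2; linarith
  have hfin : Real.exp (-(R * k * T)) < ε := by
    have hlog : -(R * k * T) < Real.log ε := by
      rw [one_div, Real.log_inv] at hRkT
      nlinarith
    calc Real.exp (-(R * k * T)) < Real.exp (Real.log ε) := Real.exp_lt_exp.2 hlog
      _ = ε := Real.exp_log hε
  linarith
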